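/- arXiv:2308.00123 — 2 statements merged into one kernel-verified Lean document; each statement's English description precedes it below -/
import Mathlib

section
/- For every n > 1, the maximal product M_n over partitions of n satisfies M_{n+3} = 3 · M_n. -/
noncomputable def maxNorm (n : ℕ) : ℕ :=
  (Finset.univ : Finset (Nat.Partition n)).sup fun p => p.parts.prod

def g : ℕ → ℕ
  | 0 => 1
  | 1 => 1
  | 2 => 2
  | 3 => 3
  | 4 => 4
  | (n+5) => 3 * g (n+2)

lemma g_pos : ∀ m, 0 < g m := by
  intro m
  induction m using Nat.strong_induction_on with
  | _ m ih =>
    match m with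
    | 0 | 1 | 2 | 3 | 4 => simp [g]
    | (j+5) =>
      have := ih (j+2) (by omega)
      simp [g]; omega

lemma g_step (m : ℕ) (hm : 2 ≤ m) : g (m + 3) = 3 * g m := by
  match m with
  | 0 | 1 => omega
  | (k+2) => rfl

lemma three_g_le (m : ℕ) : 3 * g m ≤ g (m + 3) := by
  match m with
  | 0 => simp [g]
  | 1 => simp [g]
  | (k+2) => rw [g_step _ (by omega)]

lemma key_small : ∀ k a, 1 ≤ a → a ≤ 4 → a * g k ≤ g (k + a) := by
  intro k
  induction k using Nat.strong_induction_on with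
  | _ k ih =>
    match k with
    | 0 | 1 | 2 | 3 | 4 =>
      intro a h1 h4
      interval_cases a <;> simp [g]
    | (j+5) =>
      intro a h1 h4
      have h := ih (j+2) (by omega) a h1 h4
      have e1 : g (j + 5 + a) = 3 * g (j + 2 + a) := by
        have e : j + 5 + a = (j + 2 + a) + 3 := by ring
        rw [e, g_step _ (by omega)]
      have e2 : g (j+5) = 3 * g (j+2) := by
        have e : j + 5 = (j + 2) + 3 := by ring
        rw [e, g_step _ (by omega)]
      rw [e1, e2]
      nlinarith

lemma key : ∀ a k, 1 ≤ a → a * g k ≤ g (k + a) := by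
  intro a
  induction a using Nat.strong_induction_on with
  | _ a ih =>
    intro k h1
    by_cases h4 : a ≤ 4
    · exact key_small k a h1 h4
    · push_neg at h4
      obtain ⟨b, rfl⟩ : ∃ b, a = b + 3 := ⟨a - 3, by omega⟩
      have ih3 := ih b (by omega) k (by omega)
      have h2 : (b + 3) * g k ≤ 3 * ((b + 3 - 3) * g k) := by
        have := g_pos k
        simp only [Nat.add_sub_cancel]
        nlinarith
      calc (b + 3) * g k ≤ 3 * ((b + 3 - 3) * g k) := h2
        _ = 3 * (b * g k) := by norm_num
        _ ≤ 3 * g (k + b) := by omega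
        _ ≤ g (k + b + 3) := three_g_le _
        _ = g (k + (b + 3)) := by rw [Nat.add_assoc]

lemma prod_le_g : ∀ (s : Multiset ℕ), (∀ x ∈ s, 0 < x) → s.prod ≤ g s.sum := by
  intro s
  induction s using Multiset.induction with
  | empty => intro _; simp [g]
  | cons a s ih =>
    intro h
    have ha : 1 ≤ a := h a (Multiset.mem_cons_self a s)
    have hs := ih fun x hx => h x (Multiset.mem_cons_of_mem hx)
    simp only [Multiset.prod_cons, Multiset.sum_cons]
    calc a * s.prod ≤ a * g s.sum := Nat.mul_le_mul_left a hs
      _ ≤ g (s.sum + a) := key a s.sum ha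
      _ = g (a + s.sum) := by rw [Nat.add_comm]

lemma maxNorm_le (m : ℕ) : maxNorm m ≤ g m := by
  apply Finset.sup_le
  intro p _
  have := prod_le_g p.parts (fun x hx => p.parts_pos hx)
  rwa [p.parts_sum] at this

/-- the single-part partition -/
def singlePart (m : ℕ) (hm : 0 < m) : Nat.Partition m where
  parts := {m}
  parts_pos := by intro i hi; simp at hi; omega
  parts_sum := by simp

def addThree (m : ℕ) (p : Nat.Partition m) : Nat.Partition (m + 3) where
  parts := 3 ::ₘ p.parts
  parts_pos := by
    intro i hi
    rcases Multiset.mem_cons.mp hi with h | h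
    · omega
    · exact p.parts_pos h
  parts_sum := by simp [p.parts_sum]; omega

lemma le_maxNorm {m : ℕ} (p : Nat.Partition m) : p.parts.prod ≤ maxNorm m :=
  Finset.le_sup (f := fun p : Nat.Partition m => p.parts.prod) (Finset.mem_univ p)

lemma g_le_maxNorm : ∀ m, g m ≤ maxNorm m := by
  intro m
  induction m using Nat.strong_induction_on with
  | _ m ih =>
    match m with
    | 0 =>
      have : (Nat.Partition.ofSums 0 0 rfl).parts.prod = 1 := by
        simp [Nat.Partition.ofSums]
      have h := le_maxNorm (Nat.Partition.ofSums 0 0 rfl)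
      rw [this] at h
      simpa [g] using h
    | 1 =>
      have h := le_maxNorm (singlePart 1 (by norm_num))
      simpa [singlePart, g] using h
    | 2 =>
      have h := le_maxNorm (singlePart 2 (by norm_num))
      simpa [singlePart, g] using h
    | 3 =>
      have h := le_maxNorm (singlePart 3 (by norm_num))
      simpa [singlePart, g] using h
    | 4 =>
      have h := le_maxNorm (singlePart 4 (by norm_num))
      simpa [singlePart, g] using h
    | (j+5) =>
      have ihj := ih (j+2) (by omega)
      -- pick a partition of j+2 with product ≥ g (j+2): use any partition achieving maxNorm
      obtain ⟨p, hp⟩ : ∃ p : Nat.Partition (j+2), maxNorm (j+2) = p.parts.prod := by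
        obtain ⟨p, _, hp⟩ := Finset.exists_mem_eq_sup (Finset.univ : Finset (Nat.Partition (j+2)))
          (Finset.univ_nonempty) (fun p => p.parts.prod)
        exact ⟨p, hp⟩
      have h := le_maxNorm (addThree (j+2) p)
      have hprod : (addThree (j+2) p).parts.prod = 3 * p.parts.prod := by
        simp [addThree]
      have : g (j+5) = 3 * g (j+2) := by
        have e : j + 5 = (j + 2) + 3 := by ring
        rw [e, g_step _ (by omega)]
      rw [this]
      calc 3 * g (j+2) ≤ 3 * p.parts.prod := by rw [← hp]; omega
        _ = (addThree (j+2) p).parts.prod := hprod.symm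
        _ ≤ maxNorm (j+2+3) := le_maxNorm _
        _ = maxNorm (j+5) := by norm_num

lemma maxNorm_eq_g (m : ℕ) : maxNorm m = g m :=
  le_antisymm (maxNorm_le m) (g_le_maxNorm m)

theorem stmt7 (n : ℕ) (hn : 1 < n) : maxNorm (n + 3) = 3 * maxNorm n := by
  rw [maxNorm_eq_g, maxNorm_eq_g, g_step n hn]
end

section
/- The norm of a partition of n is always at most 3^(n/3) · (4/3) for n ≥ 1; equivalently, for any multiset of positive integers with sum n, the product of its elements is at most (4/3)·3^(n/3). -/
lemma cube_le_three_pow (k : ℕ) : k ^ 3 ≤ 3 ^ k := by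
  rcases lt_or_ge k 3 with h | h
  · interval_cases k <;> norm_num
  · induction k, h using Nat.le_induction with
    | base => norm_num
    | succ n hn ih =>
      calc (n + 1) ^ 3 ≤ 3 * n ^ 3 := by nlinarith [Nat.mul_le_mul_right (n^2) hn, Nat.mul_le_mul_right n hn]
        _ ≤ 3 * 3 ^ n := Nat.mul_le_mul_left 3 ih
        _ = 3 ^ (n + 1) := by ring

lemma nat_le_rpow (k : ℕ) : (k : ℝ) ≤ (3 : ℝ) ^ ((k : ℝ) / 3) := by
  have hb : (0 : ℝ) ≤ (3 : ℝ) ^ ((k : ℝ) / 3) := Real.rpow_nonneg (by norm_num) _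
  rw [← pow_le_pow_iff_left₀ (by positivity) hb (n := 3) (by norm_num)]
  rw [← Real.rpow_natCast ((3 : ℝ) ^ ((k : ℝ) / 3)) 3, ← Real.rpow_mul (by norm_num)]
  have : (k : ℝ) / 3 * (3 : ℕ) = (k : ℕ) := by push_cast; ring
  rw [this, Real.rpow_natCast]
  exact_mod_cast cube_le_three_pow k

lemma prod_le (s : Multiset ℕ) : ((s.prod : ℕ) : ℝ) ≤ (3 : ℝ) ^ ((s.sum : ℝ) / 3) := by
  induction s using Multiset.induction with
  | empty => simp
  | cons a s ih =>
    simp only [Multiset.prod_cons, Multiset.sum_cons, Nat.cast_mul, Nat.cast_add]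
    have h : ((a : ℝ) + s.sum) / 3 = (a : ℝ) / 3 + (s.sum : ℝ) / 3 := by ring
    rw [h, Real.rpow_add (by norm_num)]
    exact mul_le_mul (nat_le_rpow a) ih (by positivity)
      (Real.rpow_nonneg (by norm_num) _)

theorem stmt15 (n : ℕ) (hn : 1 ≤ n) (lam : Nat.Partition n) :
    (lam.parts.prod : ℝ) ≤ (4 / 3) * (3 : ℝ) ^ ((n : ℝ) / 3) := by
  have h1 := prod_le lam.parts
  rw [lam.parts_sum] at h1
  have h2 : (0 : ℝ) ≤ (3 : ℝ) ^ ((n : ℝ) / 3) := Real.rpow_nonneg (by norm_num) _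
  nlinarith
end
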